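/- The sum over all compositions C of a positive integer m of (m!/∏(parts of C)!)·(−1)^{(number of parts of C)−1} equals (−1)^{m−1}. -/

import Mathlib

open Finset

private lemma list_prod_factorial_dvd (l : List ℕ) :
    (l.map Nat.factorial).prod ∣ l.sum.factorial := by
  induction l with
  | nil => simp
  | cons a l ih =>
    simp only [List.map_cons, List.prod_cons, List.sum_cons]
    exact (mul_dvd_mul_left _ ih).trans (Nat.factorial_mul_factorial_dvd_factorial_add a l.sum)

private lemma div_aux {j m P : ℕ} (hj : j ≤ m) (hP : P ∣ j.factorial) (hP0 : 0 < P) :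
    m.factorial / ((m - j).factorial * P) = m.choose j * (j.factorial / P) := by
  obtain ⟨q, hq⟩ := hP
  have h1 : m.factorial = ((m - j).factorial * P) * (m.choose j * q) := by
    rw [← Nat.choose_mul_factorial_mul_factorial hj, hq]; ring
  rw [h1, Nat.mul_div_cancel_left _ (by positivity), hq, Nat.mul_div_cancel_left _ hP0]

private def compEquiv (m : ℕ) : Composition (m + 1) ≃ Σ j : Fin (m + 1), Composition j where
  toFun c := ⟨⟨c.blocks.tail.sum, by
      have h := c.blocks_sum
      cases hb : c.blocks with
      | nil => rw [hb] at h; simp at h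
      | cons a l =>
        have ha : 0 < a := c.blocks_pos (hb ▸ (List.mem_cons_self : a ∈ a :: l))
        rw [hb] at h
        simp only [List.sum_cons] at h
        simp only [hb, List.tail_cons]
        omega⟩,
    ⟨c.blocks.tail, fun hi => c.blocks_pos (List.mem_of_mem_tail hi), rfl⟩⟩
  invFun p := ⟨(m + 1 - p.1) :: p.2.blocks, by
      intro i hi
      rw [List.mem_cons] at hi
      rcases hi with rfl | hi
      · have := p.1.isLt; omega
      · exact p.2.blocks_pos hi
      , by
      simp only [List.sum_cons, p.2.blocks_sum]
      have := p.1.isLt; omega⟩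
  left_inv c := by
    apply Composition.ext
    have h := c.blocks_sum
    cases hb : c.blocks with
    | nil => rw [hb] at h; simp at h
    | cons a l =>
      rw [hb] at h
      simp only [List.sum_cons] at h
      have ha : 0 < a := c.blocks_pos (hb ▸ (List.mem_cons_self : a ∈ a :: l))
      simp only [hb, List.tail_cons]
      congr 1
      omega
  right_inv := by
    rintro ⟨⟨j, hj⟩, bl, hpos, hsum⟩
    simp only at hsum
    subst hsum
    rfl

private lemma comp0_univ : (Finset.univ : Finset (Composition 0)) = {Composition.ones 0} := by
  ext c
  simp only [Finset.mem_univ, Finset.mem_singleton, true_iff]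
  exact Composition.eq_ones_iff_le_length.2 (Nat.zero_le _)

private lemma unique_comp0 : ∀ c : Composition 0, c = Composition.ones 0 := fun c =>
  Composition.eq_ones_iff_le_length.2 (Nat.zero_le _)

private lemma key : ∀ m : ℕ, (∑ c : Composition m,
    ((m.factorial / (c.blocks.map Nat.factorial).prod : ℕ) : ℤ) * (-1) ^ (c.length - 1))
    = (-1) ^ (m - 1) := by
  intro m
  induction m using Nat.strong_induction_on with
  | _ m ih =>
  match m with
  | 0 =>
    rw [comp0_univ, Finset.sum_singleton]
    simp [Composition.ones, Composition.length]
  | m + 1 =>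
    rw [← Equiv.sum_comp (compEquiv m).symm]
    rw [← Finset.univ_sigma_univ, Finset.sum_sigma]
    have hterm : ∀ (j : Fin (m+1)) (d : Composition (j : ℕ)),
        (((m+1).factorial / (((compEquiv m).symm ⟨j, d⟩).blocks.map Nat.factorial).prod : ℕ) : ℤ)
          * (-1) ^ (((compEquiv m).symm ⟨j, d⟩).length - 1)
        = ((m+1).choose j : ℤ) * (((j : ℕ).factorial / (d.blocks.map Nat.factorial).prod : ℕ) : ℤ)
          * (-1) ^ d.length := by
      intro j d
      have hblocks : ((compEquiv m).symm ⟨j, d⟩).blocks = (m + 1 - (j:ℕ)) :: d.blocks := rfl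
      have hP0 : 0 < (d.blocks.map Nat.factorial).prod := by
        apply List.prod_pos
        intro a ha
        simp only [List.mem_map] at ha
        obtain ⟨b, _, rfl⟩ := ha
        exact Nat.factorial_pos b
      have hPd : (d.blocks.map Nat.factorial).prod ∣ (j:ℕ).factorial := by
        have h2 := list_prod_factorial_dvd d.blocks
        rwa [d.blocks_sum] at h2
      have hlen : ((compEquiv m).symm ⟨j, d⟩).length = d.length + 1 := by
        simp [Composition.length, hblocks]
      rw [hlen, hblocks]
      simp only [List.map_cons, List.prod_cons, Nat.add_sub_cancel]
      rw [div_aux (Nat.le_of_lt_succ j.isLt |>.trans (Nat.le_succ m)) hPd hP0]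
      push_cast
      ring
    simp only [hterm]
    rw [Fin.sum_univ_eq_sum_range
      (fun j => ∑ d : Composition j, ((m+1).choose j : ℤ) *
        ((j.factorial / (d.blocks.map Nat.factorial).prod : ℕ) : ℤ) * (-1) ^ d.length)]
    rw [Finset.sum_range_succ']
    have hF0 : (∑ d : Composition 0, ((m+1).choose 0 : ℤ) *
        ((Nat.factorial 0 / (d.blocks.map Nat.factorial).prod : ℕ) : ℤ) * (-1) ^ d.length) = 1 := by
      rw [comp0_univ, Finset.sum_singleton]
      simp [Composition.ones, Composition.length]
    rw [hF0]
    have hF : ∀ i ∈ Finset.range m, (∑ d : Composition (i+1), ((m+1).choose (i+1) : ℤ) *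
        (((i+1).factorial / (d.blocks.map Nat.factorial).prod : ℕ) : ℤ) * (-1) ^ d.length)
        = (-1) ^ (i+1) * ((m+1).choose (i+1) : ℤ) := by
      intro i hi
      simp only [Finset.mem_range] at hi
      have hsign : ∀ d : Composition (i+1), ((-1:ℤ)) ^ d.length = (-1) * (-1) ^ (d.length - 1) := by
        intro d
        have h1 : 1 ≤ d.length := d.length_pos_of_pos (Nat.succ_pos i)
        conv_lhs => rw [show d.length = (d.length - 1) + 1 by omega]
        rw [pow_succ]; ring
      calc (∑ d : Composition (i+1), ((m+1).choose (i+1) : ℤ) *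
            (((i+1).factorial / (d.blocks.map Nat.factorial).prod : ℕ) : ℤ) * (-1) ^ d.length)
          = (-((m+1).choose (i+1) : ℤ)) * ∑ d : Composition (i+1),
            (((i+1).factorial / (d.blocks.map Nat.factorial).prod : ℕ) : ℤ) * (-1) ^ (d.length - 1) := by
            rw [Finset.mul_sum]
            apply Finset.sum_congr rfl
            intro d _
            rw [hsign d]; ring
        _ = (-1) ^ (i+1) * ((m+1).choose (i+1) : ℤ) := by
            rw [ih (i+1) (by omega)]
            rw [pow_succ]
            simp
            ring
    rw [Finset.sum_congr rfl hF]
    have halt := Int.alternating_sum_range_choose_of_ne (n := m+1) (by omega)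
    rw [Finset.sum_range_succ, Finset.sum_range_succ'] at halt
    simp only [Nat.choose_self, Nat.choose_zero_right, Nat.cast_one, mul_one, pow_zero, one_mul] at halt
    have hpow : ((-1:ℤ)) ^ (m+1) = -(-1)^m := by rw [pow_succ]; ring
    simp only [Nat.add_sub_cancel]
    rw [hpow] at halt
    linarith

/-- The sum over all compositions of a positive integer `m` of
`(m!/∏(parts)!)·(−1)^{(#parts)−1}` equals `(−1)^{m−1}`. -/
theorem stmt12 (m : ℕ) (hm : 1 ≤ m) :
    ∑ c : Composition m,
        ((m.factorial / (c.blocks.map Nat.factorial).prod : ℕ) : ℤ) * (-1) ^ (c.length - 1)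
      = (-1) ^ (m - 1) := by
  exact key m
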